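/- arXiv:2407.17680 — 3 statements merged into one kernel-verified Lean document; each statement's English description precedes it below -/
import Mathlib

section
/- The number of pairs (a,b) ∈ ℤ² with |a| ≤ X and |b| ≤ X² such that either b(a²−4b) = 0, or the 2-torsion subgroup {P ∈ E_{a,b}(ℚ) : 2·P = O} of the elliptic curve E_{a,b}: y² = x³ + ax² + bx does not have exactly 2 elements, is O(X²). In particular, for 100% of pairs (a,b) ordered this way, E_{a,b}(ℚ)[2] is cyclic of order 2. -/
/-- The elliptic curve `y² = x³ + ax² + bx` over `ℚ`. -/
noncomputable def Eab (a b : ℤ) : WeierstrassCurve.Affine ℚ :=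
  { a₁ := 0, a₂ := (a : ℚ), a₃ := 0, a₄ := (b : ℚ), a₆ := 0 }

open WeierstrassCurve.Affine in
lemma Eab_ns00 (a b : ℤ) (hb : b ≠ 0) : (Eab a b).Nonsingular 0 0 := by
  rw [nonsingular_zero]
  simp [Eab, hb]

open WeierstrassCurve.Affine in
lemma Eab_key (a b : ℤ) (hb : b ≠ 0) (hsq : ¬ ∃ c : ℤ, c ^ 2 = a ^ 2 - 4 * b) :
    Nat.card {P : (Eab a b).Point // 2 • P = 0} = 2 := by
  have hset : {P : (Eab a b).Point | 2 • P = 0} = {0, Point.some 0 0 (Eab_ns00 a b hb)} := by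
    ext P
    have h2 : 2 • P = 0 ↔ P = -P := by
      rw [two_smul, ← neg_eq_iff_add_eq_zero, eq_comm]
    rw [Set.mem_setOf_eq, h2]
    constructor
    · intro hP
      match P, hP with
      | Point.zero, _ => exact Or.inl rfl
      | @Point.some _ _ _ x y h, hP =>
        rw [Point.neg_some] at hP
        obtain ⟨-, hy⟩ := Point.some.inj hP
        have hy0 : y = 0 := by
          have : y = (Eab a b).negY x y := hy
          rw [negY] at this
          simp only [Eab] at this
          linarith [this]
        subst hy0
        have heq := h.1
        rw [equation_iff] at heq
        simp only [Eab] at heq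
        rcases eq_or_ne x 0 with hx | hx
        · subst hx
          exact Or.inr (by congr)
        · exfalso
          have hquad : x ^ 2 + a * x + b = 0 := by
            have hprod : x * (x ^ 2 + (a : ℚ) * x + b) = 0 := by linear_combination -heq
            rcases mul_eq_zero.mp hprod with h' | h'
            · exact absurd h' hx
            · exact h'
          have hq2 : ((2 * x + a) : ℚ) ^ 2 = ((a ^ 2 - 4 * b : ℤ) : ℚ) := by
            push_cast
            nlinarith [hquad]
          have : ¬ Irrational ((2 * x + a : ℚ) : ℝ) := Rat.not_irrational _
          have hex : ∃ y : ℤ, ((2 * x + a : ℚ) : ℝ) = y := by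
            by_contra hno
            exact this (irrational_nrt_of_notint_nrt 2 (a ^ 2 - 4 * b)
              (by exact_mod_cast hq2) hno (by norm_num))
          obtain ⟨c, hc⟩ := hex
          refine hsq ⟨c, ?_⟩
          have hcq : ((c : ℚ)) = 2 * x + a := by exact_mod_cast hc.symm
          have : ((c : ℚ)) ^ 2 = ((a ^ 2 - 4 * b : ℤ) : ℚ) := by rw [hcq, hq2]
          exact_mod_cast this
    · rintro (rfl | rfl)
      · simp
      · rw [Point.neg_some]
        congr 1
        · simp [negY, Eab]
  have : Nat.card {P : (Eab a b).Point // 2 • P = 0} =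
      Set.ncard {P : (Eab a b).Point | 2 • P = 0} := (Nat.card_coe_set_eq _).symm ▸ rfl
  rw [this, hset, Set.ncard_pair (Ne.symm (Point.some_ne_zero _))]

theorem two_torsion_usually_cyclic_of_order_two :
    ∃ C : ℝ, 0 < C ∧ ∀ X : ℝ, 1 ≤ X →
      (Set.ncard {q : ℤ × ℤ | (|q.1| : ℝ) ≤ X ∧ (|q.2| : ℝ) ≤ X ^ 2 ∧
        (q.2 * (q.1 ^ 2 - 4 * q.2) = 0 ∨
          Nat.card {P : (Eab q.1 q.2).Point // 2 • P = 0} ≠ 2)} : ℝ) ≤ C * X ^ 2 := by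
  refine ⟨35, by norm_num, fun X hX => ?_⟩
  set N : ℤ := ⌈X⌉ with hN
  have hN1 : 1 ≤ N := by exact_mod_cast Int.one_le_ceil_iff.mpr (by linarith)
  have hNX : (N : ℝ) ≤ 2 * X := by
    have := Int.ceil_le_floor_add_one X
    have h1 : (N : ℝ) ≤ X + 1 := by
      calc (N : ℝ) = (⌈X⌉ : ℝ) := rfl
        _ ≤ X + 1 := le_of_lt (Int.ceil_lt_add_one X)
    linarith
  have hXN : X ≤ (N : ℝ) := Int.le_ceil X
  set T : Finset (ℤ × ℤ) := Finset.Icc (-N) N ×ˢ Finset.Icc 0 (3 * N) with hT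
  set f : ℤ × ℤ → ℤ × ℤ := fun p => (p.1, (p.1 ^ 2 - p.2 ^ 2) / 4) with hf
  set B := {q : ℤ × ℤ | (|q.1| : ℝ) ≤ X ∧ (|q.2| : ℝ) ≤ X ^ 2 ∧
        (q.2 * (q.1 ^ 2 - 4 * q.2) = 0 ∨
          Nat.card {P : (Eab q.1 q.2).Point // 2 • P = 0} ≠ 2)} with hB
  have hsub : B ⊆ f '' (T : Set (ℤ × ℤ)) := by
    rintro ⟨a, b⟩ ⟨ha, hb, hbad⟩
    simp only at ha hb hbad
    -- produce c ≥ 0 with c^2 = a^2 - 4*b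
    have hc : ∃ c : ℤ, 0 ≤ c ∧ c ^ 2 = a ^ 2 - 4 * b := by
      rcases hbad with h0 | hcard
      · rcases mul_eq_zero.mp h0 with h0 | h0
        · exact ⟨|a|, abs_nonneg a, by rw [sq_abs]; omega⟩
        · exact ⟨0, le_refl 0, by omega⟩
      · by_contra hno
        rcases eq_or_ne b 0 with rfl | hb0
        · exact hno ⟨|a|, abs_nonneg a, by rw [sq_abs]; ring⟩
        · refine hcard (Eab_key a b hb0 ?_)
          rintro ⟨c, hc2⟩
          exact hno ⟨|c|, abs_nonneg c, by rw [sq_abs]; exact hc2⟩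
    obtain ⟨c, hc0, hc2⟩ := hc
    refine ⟨(a, c), ?_, ?_⟩
    · have haN : -(N : ℝ) ≤ (a : ℝ) ∧ (a : ℝ) ≤ (N : ℝ) :=
        abs_le.mp (le_trans ha hXN)
      have ha' : -N ≤ a ∧ a ≤ N := ⟨by exact_mod_cast haN.1, by exact_mod_cast haN.2⟩
      have hcle : c ≤ 3 * N := by
        have hcsq : ((c : ℝ)) ^ 2 ≤ 5 * X ^ 2 := by
          have : ((c ^ 2 : ℤ) : ℝ) = (a : ℝ) ^ 2 - 4 * (b : ℝ) := by
            rw [hc2]; push_cast; ring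
          have habs : (a : ℝ) ^ 2 ≤ X ^ 2 := by
            nlinarith [abs_nonneg (a : ℝ), sq_abs (a : ℝ), ha]
          have hbabs : -(X ^ 2) ≤ (b : ℝ) := by
            have := abs_le.mp hb
            exact_mod_cast this.1
          calc ((c : ℝ)) ^ 2 = ((c ^ 2 : ℤ) : ℝ) := by push_cast; ring
            _ = (a : ℝ) ^ 2 - 4 * (b : ℝ) := this
            _ ≤ X ^ 2 + 4 * X ^ 2 := by linarith
            _ = 5 * X ^ 2 := by ring
        have hc3X : (c : ℝ) ≤ 3 * X := by
          nlinarith [(by exact_mod_cast hc0 : (0:ℝ) ≤ (c:ℝ)), hX, hcsq]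
        have : (c : ℝ) ≤ 3 * (N : ℝ) := le_trans hc3X (by linarith)
        exact_mod_cast this
      simp only [hT, Finset.coe_product, Set.mem_prod, Finset.mem_coe, Finset.mem_Icc]
      exact ⟨⟨ha'.1, ha'.2⟩, ⟨hc0, hcle⟩⟩
    · simp only [hf]
      have : a ^ 2 - c ^ 2 = 4 * b := by omega
      rw [this]
      simp [Int.mul_ediv_cancel_left b (by norm_num : (4:ℤ) ≠ 0)]
  have hcount : (B.ncard : ℝ) ≤ ((2 * N + 1).toNat * (3 * N + 1).toNat : ℕ) := by
    have h1 : B.ncard ≤ (f '' (T : Set (ℤ × ℤ))).ncard :=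
      Set.ncard_le_ncard hsub ((T.finite_toSet).image f)
    have h2 : (f '' (T : Set (ℤ × ℤ))).ncard ≤ (T : Set (ℤ × ℤ)).ncard :=
      Set.ncard_image_le T.finite_toSet
    have h3 : (T : Set (ℤ × ℤ)).ncard = T.card := Set.ncard_coe_finset T
    have h4 : T.card = (2 * N + 1).toNat * (3 * N + 1).toNat := by
      rw [hT, Finset.card_product, Int.card_Icc, Int.card_Icc]
      congr 1 <;> [congr 1; congr 1] <;> omega
    exact_mod_cast le_trans h1 (le_trans h2 (le_of_eq (h3.trans h4)))
  have e1 : (((2 * N + 1).toNat : ℕ) : ℝ) = 2 * (N : ℝ) + 1 := by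
    have h := Int.toNat_of_nonneg (show (0:ℤ) ≤ 2 * N + 1 by omega)
    have := congrArg (fun z : ℤ => (z : ℝ)) h
    push_cast at this
    exact this
  have e2 : (((3 * N + 1).toNat : ℕ) : ℝ) = 3 * (N : ℝ) + 1 := by
    have h := Int.toNat_of_nonneg (show (0:ℤ) ≤ 3 * N + 1 by omega)
    have := congrArg (fun z : ℤ => (z : ℝ)) h
    push_cast at this
    exact this
  have hfinal : (((2 * N + 1).toNat * (3 * N + 1).toNat : ℕ) : ℝ) ≤ 35 * X ^ 2 := by
    rw [Nat.cast_mul, e1, e2]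
    have hN1' : (1 : ℝ) ≤ (N : ℝ) := by exact_mod_cast hN1
    nlinarith [hNX, hX, hN1']
  calc (B.ncard : ℝ) ≤ _ := hcount
    _ ≤ 35 * X ^ 2 := hfinal
end

section
/- Let M ≥ 1 and let q₁ < q₂ < … < q_M be distinct odd primes. There exists a constant c > 0 (depending on q₁,…,q_M) such that for all sufficiently large X, the number of pairs (a,b) ∈ ℤ² with |a| ≤ X, |b| ≤ X², gcd(a,b) = 1, and ν_{q_i}(a²−4b) = 1 for every 1 ≤ i ≤ M, is at least c·X³. -/
lemma ediv_bounds (x m : ℤ) (hm : 0 < m) : m * (x / m) ≤ x ∧ x - m < m * (x/m) := by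
  have h1 := Int.emod_add_mul_ediv x m
  have h2 := Int.emod_nonneg x hm.ne'
  have h3 := Int.emod_lt_of_pos x hm
  omega

/-- Upper bound for count of an AP in an interval. -/
lemma count_upper (lo hi r m : ℤ) (hm : 0 < m) (hlohi : lo ≤ hi) :
    (((Finset.Icc lo hi).filter (fun a => m ∣ a - r)).card : ℝ) ≤ ((hi : ℝ) - lo)/m + 2 := by
  classical
  set s := (Finset.Icc lo hi).filter (fun a => m ∣ a - r) with hs
  have hmR : (0:ℝ) < (m:ℝ) := by exact_mod_cast hm
  have hcard : s.card ≤ (Finset.Icc ((lo - r)/m) ((hi - r)/m)).card := by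
    apply Finset.card_le_card_of_injOn (fun a => (a - r)/m)
    · intro a ha
      simp only [hs, Finset.mem_coe, Finset.mem_filter, Finset.mem_Icc] at ha
      rw [Finset.mem_coe, Finset.mem_Icc]
      obtain ⟨⟨h1, h2⟩, h3⟩ := ha
      exact ⟨Int.ediv_le_ediv hm (by omega), Int.ediv_le_ediv hm (by omega)⟩
    · intro a ha b hb hab
      simp only [hs, Finset.coe_filter, Set.mem_setOf_eq, Finset.mem_Icc] at ha hb
      have ha' := Int.ediv_mul_cancel ha.2
      have hb' := Int.ediv_mul_cancel hb.2
      simp only at hab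
      nlinarith [ha', hb', hab]
  have h2 : ((Finset.Icc ((lo - r)/m) ((hi - r)/m)).card : ℝ) ≤ ((hi:ℝ) - lo)/m + 2 := by
    rw [Int.card_Icc]
    have e1 := ediv_bounds (hi - r) m hm
    have e2 := ediv_bounds (lo - r) m hm
    have hle : (((hi - r)/m + 1 - (lo - r)/m : ℤ) : ℝ) ≤ ((hi:ℝ) - lo)/m + 2 := by
      have f1 : (m:ℝ) * (((hi - r)/m : ℤ) : ℝ) ≤ (hi:ℝ) - r := by exact_mod_cast e1.1
      have f2 : (hi:ℝ) - r - m < (m:ℝ) * (((hi - r)/m : ℤ) : ℝ) := by exact_mod_cast e1.2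
      have f3 : (m:ℝ) * (((lo - r)/m : ℤ) : ℝ) ≤ (lo:ℝ) - r := by exact_mod_cast e2.1
      have f4 : (lo:ℝ) - r - m < (m:ℝ) * (((lo - r)/m : ℤ) : ℝ) := by exact_mod_cast e2.2
      rw [div_add' _ _ _ hmR.ne', le_div_iff₀ hmR]
      push_cast
      nlinarith [f1, f2, f3, f4]
    have hnn : (0:ℝ) ≤ ((hi:ℝ) - lo)/m + 2 := by
      have : (0:ℝ) ≤ ((hi:ℝ) - lo)/m := by
        apply div_nonneg _ hmR.le
        have : (lo:ℝ) ≤ hi := by exact_mod_cast hlohi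
        linarith
      linarith
    calc ((((hi - r)/m + 1 - (lo - r)/m).toNat : ℤ) : ℝ)
        = ((max ((hi - r)/m + 1 - (lo - r)/m) 0 : ℤ) : ℝ) := by rw [Int.toNat_eq_max]
      _ ≤ _ := by
          rcases max_cases ((hi - r)/m + 1 - (lo - r)/m) 0 with ⟨h,_⟩|⟨h,_⟩ <;> rw [h]
          · exact hle
          · exact_mod_cast hnn
  calc (s.card : ℝ) ≤ _ := by exact_mod_cast hcard
    _ ≤ _ := h2

/-- Lower bound for count of an AP in an interval. -/
lemma count_lower (lo hi r m : ℤ) (hm : 0 < m) :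
    ((hi : ℝ) - lo)/m - 1 ≤ (((Finset.Icc lo hi).filter (fun a => m ∣ a - r)).card : ℝ) := by
  classical
  set k₁ := -((r - lo)/m) with hk₁
  set k₂ := (hi - r)/m with hk₂
  have hmR : (0:ℝ) < (m:ℝ) := by exact_mod_cast hm
  have e1 := ediv_bounds (hi - r) m hm
  have e2 := ediv_bounds (r - lo) m hm
  have hcard : (Finset.Icc k₁ k₂).card ≤ ((Finset.Icc lo hi).filter (fun a => m ∣ a - r)).card := by
    apply Finset.card_le_card_of_injOn (fun k => r + m * k)
    · intro k hk
      rw [Finset.mem_coe, Finset.mem_Icc] at hk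
      rw [Finset.mem_coe, Finset.mem_filter, Finset.mem_Icc]
      beta_reduce
      refine ⟨⟨?_, ?_⟩, ⟨k, by ring⟩⟩
      · nlinarith [hk.1, e2.1]
      · nlinarith [hk.2, e1.1]
    · intro a _ b _ hab
      simp only at hab
      exact mul_left_cancel₀ hm.ne' (by linarith : m * a = m * b)
  have hlow : ((hi : ℝ) - lo)/m - 1 ≤ ((Finset.Icc k₁ k₂).card : ℝ) := by
    rw [Int.card_Icc]
    have f2 : (hi:ℝ) - r - m < (m:ℝ) * ((k₂ : ℤ) : ℝ) := by exact_mod_cast e1.2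
    have f4 : (r:ℝ) - lo - m < (m:ℝ) * (((r - lo)/m : ℤ) : ℝ) := by exact_mod_cast e2.2
    have hself : ((k₂ + 1 - k₁ : ℤ) : ℝ) ≤ (((k₂ + 1 - k₁).toNat : ℤ) : ℝ) := by
      exact_mod_cast Int.self_le_toNat _
    have hkc : ((k₁ : ℤ) : ℝ) = -(((r - lo)/m : ℤ) : ℝ) := by
      rw [hk₁]; push_cast; ring
    have : ((hi : ℝ) - lo)/m - 1 ≤ ((k₂ + 1 - k₁ : ℤ) : ℝ) := by
      rw [div_sub' hmR.ne', div_le_iff₀ hmR]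
      push_cast
      push_cast at hkc
      nlinarith [f2, f4, hkc]
    push_cast at hself ⊢
    push_cast at this
    linarith
  calc ((hi : ℝ) - lo)/m - 1 ≤ ((Finset.Icc k₁ k₂).card : ℝ) := hlow
    _ ≤ _ := by exact_mod_cast hcard

lemma sum_inv_sq_aux (n : ℕ) (hn : 2 ≤ n) :
    (∑ d ∈ Finset.Icc 2 n, (1:ℝ)/(d:ℝ)^2) ≤ 3/4 - 1/n := by
  induction n, hn using Nat.le_induction with
  | base => norm_num
  | succ n hn ih =>
      rw [Finset.sum_Icc_succ_top (by omega)]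
      have h1 : (0:ℝ) < n := by positivity
      have h2 : (0:ℝ) < (n:ℝ) + 1 := by positivity
      have key : (1:ℝ)/((n:ℝ)+1)^2 ≤ 1/n - 1/(n+1) := by
        rw [div_sub_div _ _ h1.ne' h2.ne']
        rw [div_le_div_iff₀ (by positivity) (by positivity)]
        ring_nf
        nlinarith [h1]
      push_cast
      linarith [ih]

lemma sum_inv_sq (n : ℕ) : (∑ d ∈ Finset.Icc 2 n, (1:ℝ)/(d:ℝ)^2) ≤ 3/4 := by
  rcases le_or_gt 2 n with h | h
  · have := sum_inv_sq_aux n h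
    have h1 : (0:ℝ) < n := by positivity
    have : (0:ℝ) < 1/(n:ℝ) := by positivity
    linarith [sum_inv_sq_aux n h]
  · interval_cases n <;> norm_num

lemma sum_inv_le (n : ℕ) (X : ℝ) (hn : (n:ℝ) ≤ X) (hX : 1 ≤ X) :
    (∑ d ∈ Finset.Icc 2 n, (1:ℝ)/(d:ℝ)) ≤ 2 * Real.sqrt X := by
  classical
  set s := Real.sqrt X with hs
  have hs1 : 1 ≤ s := by
    rw [hs, show (1:ℝ) = Real.sqrt 1 by simp]
    exact Real.sqrt_le_sqrt hX
  have hs0 : 0 < s := by linarith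
  have hss : s * s = X := Real.mul_self_sqrt (by linarith)
  have hsplit : Finset.Icc 2 n =
      (Finset.Icc 2 n).filter (fun d : ℕ => (d:ℝ) ≤ s) ∪ (Finset.Icc 2 n).filter (fun d : ℕ => ¬ (d:ℝ) ≤ s) :=
    (Finset.filter_union_filter_not_eq _ _).symm
  rw [hsplit, Finset.sum_union (Finset.disjoint_filter_filter_not _ _ _)]
  have b1 : (∑ d ∈ (Finset.Icc 2 n).filter (fun d : ℕ => (d:ℝ) ≤ s), (1:ℝ)/(d:ℝ)) ≤ s * (1/2) := by
    have hsub : (Finset.Icc 2 n).filter (fun d : ℕ => (d:ℝ) ≤ s) ⊆ Finset.Icc 2 ⌊s⌋₊ := by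
      intro d hd
      simp only [Finset.mem_filter, Finset.mem_Icc] at hd ⊢
      exact ⟨hd.1.1, Nat.le_floor hd.2⟩
    calc (∑ d ∈ (Finset.Icc 2 n).filter (fun d : ℕ => (d:ℝ) ≤ s), (1:ℝ)/(d:ℝ))
        ≤ ((Finset.Icc 2 n).filter (fun d : ℕ => (d:ℝ) ≤ s)).card • ((1:ℝ)/2) := by
          apply Finset.sum_le_card_nsmul
          intro d hd
          simp only [Finset.mem_filter, Finset.mem_Icc] at hd
          have : (2:ℝ) ≤ (d:ℝ) := by exact_mod_cast hd.1.1
          rw [div_le_div_iff₀ (by linarith) (by norm_num)]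
          linarith
      _ ≤ (⌊s⌋₊:ℝ) * (1/2) := by
          rw [nsmul_eq_mul]
          have : ((Finset.Icc 2 n).filter (fun d : ℕ => (d:ℝ) ≤ s)).card ≤ (Finset.Icc 2 ⌊s⌋₊).card :=
            Finset.card_le_card hsub
          have h2 : ((Finset.Icc 2 ⌊s⌋₊).card : ℝ) ≤ (⌊s⌋₊:ℝ) := by
            rw [Nat.card_Icc]
            push_cast
            simp
          have h3 : ((Finset.filter (fun d : ℕ => (d:ℝ) ≤ s) (Finset.Icc 2 n)).card : ℝ) ≤ ((Finset.Icc 2 ⌊s⌋₊).card : ℝ) := by exact_mod_cast this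
          nlinarith [h3, h2]
      _ ≤ s * (1/2) := by
          have := Nat.floor_le hs0.le
          linarith
  have b2 : (∑ d ∈ (Finset.Icc 2 n).filter (fun d : ℕ => ¬ (d:ℝ) ≤ s), (1:ℝ)/(d:ℝ)) ≤ s := by
    calc (∑ d ∈ (Finset.Icc 2 n).filter (fun d : ℕ => ¬ (d:ℝ) ≤ s), (1:ℝ)/(d:ℝ))
        ≤ ((Finset.Icc 2 n).filter (fun d : ℕ => ¬ (d:ℝ) ≤ s)).card • ((1:ℝ)/s) := by
          apply Finset.sum_le_card_nsmul
          intro d hd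
          simp only [Finset.mem_filter, Finset.mem_Icc] at hd
          have hds : s < (d:ℝ) := by linarith [not_le.mp hd.2]
          rw [div_le_div_iff₀ (by linarith) hs0]
          linarith
      _ ≤ (n:ℝ) * (1/s) := by
          rw [nsmul_eq_mul]
          have hc : ((Finset.Icc 2 n).filter (fun d : ℕ => ¬ (d:ℝ) ≤ s)).card ≤ n := by
            calc _ ≤ (Finset.Icc 2 n).card := Finset.card_le_card (Finset.filter_subset _ _)
              _ ≤ n := by rw [Nat.card_Icc]; omega
          have : (((Finset.Icc 2 n).filter (fun d : ℕ => ¬ (d:ℝ) ≤ s)).card : ℝ) ≤ (n:ℝ) := by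
            exact_mod_cast hc
          have hsinv : (0:ℝ) < 1/s := by positivity
          nlinarith [this, hsinv]
      _ ≤ s := by
          rw [mul_one_div, div_le_iff₀ hs0]
          linarith [hn, hss]
  linarith [b1, b2, hs1]

lemma crt2 (d Q r₂ : ℤ) (h : IsCoprime d Q) :
    ∃ r : ℤ, ∀ a : ℤ, d ∣ a → Q ∣ a - r₂ → d * Q ∣ a - r := by
  obtain ⟨u, v, huv⟩ := h
  refine ⟨u * d * r₂, fun a hd hQ => ?_⟩
  apply IsCoprime.mul_dvd ⟨u, v, huv⟩
  · exact dvd_sub hd ⟨u * r₂, by ring⟩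
  · have h2 : a - u * d * r₂ = (a - r₂) + (v * r₂) * Q := by linear_combination (-r₂) * huv
    rw [h2]
    exact dvd_add hQ ⟨v * r₂, by ring⟩

lemma val_eq_one (p : ℕ) (hp : p.Prime) (z : ℤ) (h1 : (p:ℤ) ∣ z) (h2 : ¬ ((p:ℤ)^2 ∣ z)) :
    padicValInt p z = 1 := by
  haveI := Fact.mk hp
  have hz : z ≠ 0 := by rintro rfl; exact h2 (dvd_zero _)
  have ha : 1 ≤ padicValInt p z := by
    have := (padicValInt_dvd_iff 1 z).mp (by simpa using h1)
    tauto
  have hb : ¬ 2 ≤ padicValInt p z := by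
    intro hle
    exact h2 ((padicValInt_dvd_iff 2 z).mpr (Or.inr hle))
  omega

lemma exists_b0 (M : ℕ) (q : Fin M → ℕ) (hq : ∀ i, (q i).Prime) (hodd : ∀ i, q i ≠ 2)
    (hinj : Function.Injective q) :
    ∃ b₀ : ℤ, ∀ i, ((q i : ℤ))^2 ∣ 4 * b₀ - (1 - q i) := by
  classical
  set a : Fin M → ℕ := fun i => (q i)^2 with ha
  have hcop : Pairwise (Function.onFun Nat.Coprime a) := by
    intro i j hij
    exact Nat.Coprime.pow _ _ ((Nat.coprime_primes (hq i) (hq j)).mpr (fun h => hij (hinj h)))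
  let e := ZMod.prodEquivPi a hcop
  let φ : ℤ →+* Π i, ZMod (a i) := e.toRingHom.comp (Int.castRingHom (ZMod (∏ i, a i)))
  have hφ : Function.Surjective φ := e.surjective.comp ZMod.intCast_surjective
  have hφeq : ∀ (z : ℤ) (i : Fin M), φ z i = ((z : ℤ) : ZMod (a i)) := by
    have : φ = Pi.ringHom (fun i => Int.castRingHom (ZMod (a i))) := by
      apply RingHom.ext_int
    intro z i
    rw [this]
    rfl
  have hunit : ∀ i, IsUnit (4 : ZMod (a i)) := by
    intro i
    haveI : NeZero (a i) := ⟨pow_ne_zero 2 (hq i).pos.ne'⟩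
    have h4 : ((4:ℕ) : ZMod (a i)) = (4 : ZMod (a i)) := by norm_num
    rw [← h4]
    rw [ZMod.isUnit_iff_coprime]
    have : Nat.Coprime 2 (q i) := (Nat.coprime_primes Nat.prime_two (hq i)).mpr (fun h => hodd i h.symm)
    have h2 := Nat.Coprime.pow 2 2 this
    simpa [ha] using h2
  obtain ⟨b₀, hb₀⟩ := hφ (fun i => ((1 - (q i) : ℤ) : ZMod (a i)) * (4 : ZMod (a i))⁻¹)
  refine ⟨b₀, fun i => ?_⟩
  have hzi : ((4 * b₀ - (1 - (q i)) : ℤ) : ZMod (a i)) = 0 := by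
    push_cast
    have := congrFun hb₀ i
    rw [hφeq] at this
    rw [this]
    have h4i : (4 : ZMod (a i)) * ((4 : ZMod (a i))⁻¹) = 1 := ZMod.mul_inv_of_unit _ (hunit i)
    push_cast
    linear_combination (1 - ((q i : ℕ) : ZMod (a i))) * h4i
  have := (ZMod.intCast_zmod_eq_zero_iff_dvd _ (a i)).mp hzi
  have haq : ((a i : ℕ) : ℤ) = ((q i : ℤ))^2 := by
    show (((q i)^2 : ℕ) : ℤ) = _
    push_cast
    ring
  rwa [haq] at this


lemma key_ineq (s t : ℝ) (hs1 : 1 ≤ s) (ht0 : 0 < t) (ht9 : t ≤ 1/9)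
    (hst : 90000 ≤ s*t) (hts2 : 10000 ≤ s*t^2) (hsbig : 810000 ≤ s) :
    (s*s)^3*(t^2/4) ≤ (((s*s)-2)*t - 1)*((2*(s*s)^2-2)*t - 1)
      - (2*(s*s)^3*t^2*(3/4) + (2*(s*s)*t + 4*(s*s)^2*t)*(2*s) + 4*(s*s)) := by
  have h2 : s ≤ s^2 := by nlinarith
  have h3 : s^2 ≤ s^3 := by nlinarith
  have h4 : s^3 ≤ s^4 := by nlinarith
  have hs4 : 112 ≤ s^4 := by nlinarith
  have hs2 : 112 ≤ s^2 := by nlinarith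
  have hds4 : (0:ℝ) ≤ s^4 - s := by nlinarith
  have hds3 : (0:ℝ) ≤ s^3 - s := by nlinarith
  have hds2 : (0:ℝ) ≤ s^2 - s := by nlinarith
  have hts1 : 224 ≤ t*s := by nlinarith
  have hts2' : 56 ≤ t*s^2 := by nlinarith [mul_nonneg ht0.le hds2]
  have hts3 : 112 ≤ t*s^3 := by nlinarith [mul_nonneg ht0.le hds3]
  have hts4 : 28 ≤ t*s^4 := by nlinarith [mul_nonneg ht0.le hds4]
  have ht2s4 : 112 ≤ t^2*s^4 := by nlinarith [mul_nonneg (mul_nonneg ht0.le ht0.le) hds4]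
  have p1 : (0:ℝ) ≤ (t^2*s^2)*(s^4 - 112) := mul_nonneg (by positivity) (by linarith)
  have p2 : (0:ℝ) ≤ (t*s^2)*(t*s^4 - 28) := mul_nonneg (by positivity) (by linarith)
  have p3 : (0:ℝ) ≤ (t^2*s^4)*(s^2 - 112) := mul_nonneg (by positivity) (by linarith)
  have p4 : (0:ℝ) ≤ (t*s^4)*(t*s^2 - 56) := mul_nonneg (by positivity) (by linarith)
  have p5 : (0:ℝ) ≤ (t*s^3)*(t*s^3 - 112) := mul_nonneg (by positivity) (by linarith)
  have p6 : (0:ℝ) ≤ (t*s^5)*(t*s - 224) := mul_nonneg (by positivity) (by linarith)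
  have p7 : (0:ℝ) ≤ (s^2)*(t^2*s^4 - 112) := mul_nonneg (by positivity) (by linarith)
  nlinarith [p1, p2, p3, p4, p5, p6, p7, ht0, hs1]

set_option maxHeartbeats 2000000 in
theorem positive_proportion_exact_valuation (M : ℕ) (hM : 1 ≤ M) (q : Fin M → ℕ)
    (hq : ∀ i, (q i).Prime) (hodd : ∀ i, q i ≠ 2) (hmono : StrictMono q) :
    ∃ c : ℝ, 0 < c ∧ ∃ X₀ : ℝ, ∀ X : ℝ, X₀ ≤ X →
      c * X ^ 3 ≤
        (Set.ncard {ab : ℤ × ℤ | (|ab.1| : ℝ) ≤ X ∧ (|ab.2| : ℝ) ≤ X ^ 2 ∧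
          IsCoprime ab.1 ab.2 ∧
          ∀ i : Fin M, padicValInt (q i) (ab.1 ^ 2 - 4 * ab.2) = 1 ∧
            (q i : ℤ) ∣ ab.1 ^ 2 - 4 * ab.2} : ℝ) := by
  classical
  -- setup
  set Q : ℕ := ∏ i, (q i)^2 with hQdef
  have hq3 : ∀ i, 3 ≤ q i := by
    intro i
    have := (hq i).two_le
    have := hodd i
    omega
  have hQpos : 0 < Q := Finset.prod_pos (fun i _ => pow_pos (hq i).pos 2)
  have hQ9 : 9 ≤ Q := by
    have h := Finset.single_le_prod' (f := fun i => (q i)^2) (s := Finset.univ)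
      (fun i _ => Nat.one_le_iff_ne_zero.mpr (pow_ne_zero 2 (hq i).pos.ne'))
      (Finset.mem_univ (⟨0, hM⟩ : Fin M))
    have h3 := hq3 ⟨0, hM⟩
    calc 9 ≤ (q ⟨0, hM⟩)^2 := by nlinarith
      _ ≤ Q := h
  have hQdvd : ∀ i, ((q i : ℤ))^2 ∣ (Q : ℤ) := by
    intro i
    have : ((q i)^2 : ℕ) ∣ Q := Finset.dvd_prod_of_mem _ (Finset.mem_univ i)
    have := Int.natCast_dvd_natCast.mpr this
    push_cast at this
    exact this
  obtain ⟨b₀, hb₀⟩ := exists_b0 M q hq hodd hmono.injective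
  have hQR : (9:ℝ) ≤ (Q:ℝ) := by exact_mod_cast hQ9
  have hQRpos : (0:ℝ) < (Q:ℝ) := by linarith
  refine ⟨1/(4*(Q:ℝ)^2), by positivity, (10:ℝ)^9 * (Q:ℝ)^4, fun X hX => ?_⟩
  have hX1 : (1:ℝ) ≤ X := by
    have hQR4 : (9:ℝ)^4 ≤ (Q:ℝ)^4 := by
      apply pow_le_pow_left₀ (by norm_num) hQR
    nlinarith
  have hXpos : (0:ℝ) < X := by linarith
  -- integer bounds
  set N : ℤ := ⌊X⌋ with hNdef
  set N2 : ℤ := ⌊X^2⌋ with hN2def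
  have hN1 : 1 ≤ N := by rwa [hNdef, Int.le_floor, Int.cast_one]
  have hNX : (N:ℝ) ≤ X := Int.floor_le X
  have hNX' : X - 1 ≤ (N:ℝ) := by
    have := Int.lt_floor_add_one X
    linarith
  have hN21 : 1 ≤ N2 := by
    rw [hN2def, Int.le_floor, Int.cast_one]
    nlinarith
  have hN2X : (N2:ℝ) ≤ X^2 := Int.floor_le _
  have hN2X' : X^2 - 1 ≤ (N2:ℝ) := by
    have := Int.lt_floor_add_one (X^2)
    linarith
  -- the finsets
  set A : Finset ℤ := (Finset.Icc 1 N).filter (fun a => (Q:ℤ) ∣ a - 1) with hA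
  set Bs : Finset ℤ := (Finset.Icc (-N2) N2).filter (fun b => (Q:ℤ) ∣ b - b₀) with hBs
  set G : Finset (ℤ × ℤ) := A ×ˢ Bs with hG
  set T : Finset (ℤ × ℤ) := G.filter (fun ab => IsCoprime ab.1 ab.2) with hT
  set Bad : Finset (ℤ × ℤ) := G.filter (fun ab => ¬ IsCoprime ab.1 ab.2) with hBad
  set S : Set (ℤ × ℤ) := {ab : ℤ × ℤ | (|ab.1| : ℝ) ≤ X ∧ (|ab.2| : ℝ) ≤ X ^ 2 ∧
          IsCoprime ab.1 ab.2 ∧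
          ∀ i : Fin M, padicValInt (q i) (ab.1 ^ 2 - 4 * ab.2) = 1 ∧
            (q i : ℤ) ∣ ab.1 ^ 2 - 4 * ab.2} with hS
  -- step 1 : T ⊆ S
  have hTS : (↑T : Set (ℤ × ℤ)) ⊆ S := by
    rintro ⟨a, b⟩ hab
    simp only [Finset.coe_filter, Set.mem_setOf_eq, hT] at hab
    obtain ⟨habG, habc⟩ := hab
    rw [hG, Finset.mem_product] at habG
    have haA := habG.1
    have hbB := habG.2
    rw [hA, Finset.mem_filter, Finset.mem_Icc] at haA
    rw [hBs, Finset.mem_filter, Finset.mem_Icc] at hbB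
    obtain ⟨⟨ha1, haN⟩, haQ⟩ := haA
    obtain ⟨⟨hb1, hbN⟩, hbQ⟩ := hbB
    rw [hS]
    refine ⟨?_, ?_, habc, ?_⟩
    · have ha0 : (0:ℝ) < ((a:ℤ):ℝ) := by exact_mod_cast (by omega : (0:ℤ) < a)
      rw [abs_of_pos ha0]
      calc ((a:ℤ):ℝ) ≤ ((N:ℤ):ℝ) := by exact_mod_cast haN
        _ ≤ X := hNX
    · rw [abs_le]
      constructor
      · calc -(X^2) ≤ -((N2:ℤ):ℝ) := by linarith [hN2X]
          _ ≤ ((b:ℤ):ℝ) := by exact_mod_cast hb1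
      · calc ((b:ℤ):ℝ) ≤ ((N2:ℤ):ℝ) := by exact_mod_cast hbN
        _ ≤ X^2 := hN2X
    · intro i
      have hkey : ((q i : ℤ))^2 ∣ (a^2 - 4*b) - (q i) := by
        have h1 : ((q i : ℤ))^2 ∣ a - 1 := dvd_trans (hQdvd i) haQ
        have h2 : ((q i : ℤ))^2 ∣ b - b₀ := dvd_trans (hQdvd i) hbQ
        have h3 := hb₀ i
        have hre : a^2 - 4*b - (q i) = (a-1)*(a+1) - 4*(b - b₀) - (4*b₀ - (1 - (q i))) := by
          ring
        rw [hre]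
        exact dvd_sub (dvd_sub (h1.mul_right _) (h2.mul_left 4)) h3
      have hqz : (q i : ℤ) ∣ a^2 - 4*b := by
        have h1 : (q i : ℤ) ∣ (a^2 - 4*b) - (q i) :=
          dvd_trans (dvd_pow_self ((q i : ℤ)) two_ne_zero) hkey
        have : a^2 - 4*b = ((a^2 - 4*b) - (q i)) + (q i) := by ring
        rw [this]
        exact dvd_add h1 dvd_rfl
      have hqnz : ¬ ((q i : ℤ))^2 ∣ a^2 - 4*b := by
        intro hcon
        have hdq : ((q i : ℤ))^2 ∣ (q i : ℤ) := by
          have := dvd_sub hcon hkey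
          simpa using this
        have hq0 : (0:ℤ) < (q i : ℤ) := by exact_mod_cast (hq i).pos
        have := Int.le_of_dvd hq0 hdq
        have h3 : (3:ℤ) ≤ (q i : ℤ) := by exact_mod_cast hq3 i
        nlinarith
      exact ⟨val_eq_one (q i) (hq i) _ hqz hqnz, hqz⟩
  -- step 2 : S finite
  have hSfin : S.Finite := by
    apply Set.Finite.subset (Set.finite_Icc (-N, -N2) (N, N2))
    rintro ⟨a, b⟩ ⟨ha, hb, -⟩
    simp only [Set.mem_Icc, Prod.mk_le_mk]
    rw [abs_le] at ha hb
    constructor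
    constructor
    · rw [neg_le, hNdef, Int.le_floor]; push_cast; linarith [ha.1]
    · rw [hN2def, neg_le, Int.le_floor]; push_cast; linarith [hb.1]
    constructor
    · rw [hNdef, Int.le_floor]; exact ha.2
    · rw [hN2def, Int.le_floor]; exact hb.2
  -- step 3 : card comparison
  have hcard : (T.card : ℝ) ≤ (S.ncard : ℝ) := by
    have h := Set.ncard_le_ncard hTS hSfin
    rw [Set.ncard_coe_finset] at h
    exact_mod_cast h
  -- step 4: main term lower bound
  have hAcard : (X - 2)/(Q:ℝ) - 1 ≤ (A.card : ℝ) := by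
    have h := count_lower 1 N 1 (Q:ℤ) (by exact_mod_cast hQpos)
    push_cast at h
    rw [hA]
    refine le_trans ?_ h
    gcongr ((?_ : ℝ))/(Q:ℝ) - 1
    linarith
  have hBcard : (2*X^2 - 2)/(Q:ℝ) - 1 ≤ (Bs.card : ℝ) := by
    have h := count_lower (-N2) N2 b₀ (Q:ℤ) (by exact_mod_cast hQpos)
    push_cast at h
    rw [hBs]
    refine le_trans ?_ h
    gcongr ((?_ : ℝ))/(Q:ℝ) - 1
    linarith
  have hGcard : G.card = A.card * Bs.card := Finset.card_product A Bs
  have hsplitG : T.card + Bad.card = G.card := by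
    rw [hT, hBad]
    exact Finset.card_filter_add_card_filter_not _
  -- step 5 : bad bound
  set n : ℕ := N.toNat with hn
  have hnX : (n:ℝ) ≤ X := by
    have : (n:ℤ) = N := Int.toNat_of_nonneg (by omega)
    have : ((n:ℤ):ℝ) = (N:ℝ) := by exact_mod_cast this
    push_cast at this
    linarith
  have hBadsub : Bad ⊆ (Finset.Icc 2 n).biUnion
      (fun d => G.filter (fun ab => (d:ℤ) ∣ ab.1 ∧ (d:ℤ) ∣ ab.2)) := by
    intro ab hab
    rw [hBad, Finset.mem_filter] at hab
    obtain ⟨habG, habnc⟩ := hab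
    have habA : ab.1 ∈ A ∧ ab.2 ∈ Bs := by
      rw [hG, Finset.mem_product] at habG
      exact habG
    have ha1 : 1 ≤ ab.1 := by
      have := habA.1
      rw [hA, Finset.mem_filter, Finset.mem_Icc] at this
      exact this.1.1
    have haN : ab.1 ≤ N := by
      have := habA.1
      rw [hA, Finset.mem_filter, Finset.mem_Icc] at this
      exact this.1.2
    set g : ℕ := Int.gcd ab.1 ab.2 with hg
    have hg1 : g ≠ 1 := fun h => habnc (Int.isCoprime_iff_gcd_eq_one.mpr h)
    have hg0 : g ≠ 0 := by
      intro h
      rw [hg] at h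
      have := Int.gcd_eq_zero_iff.mp h
      omega
    have hgd1 : (g:ℤ) ∣ ab.1 := Int.gcd_dvd_left _ _
    have hgd2 : (g:ℤ) ∣ ab.2 := Int.gcd_dvd_right _ _
    have hgle : (g:ℤ) ≤ N := le_trans (Int.le_of_dvd (by omega) hgd1) haN
    rw [Finset.mem_biUnion]
    refine ⟨g, ?_, ?_⟩
    · rw [Finset.mem_Icc]
      constructor
      · omega
      · omega
    · rw [Finset.mem_filter]
      exact ⟨habG, hgd1, hgd2⟩
  have hBadcard : Bad.card ≤ ∑ d ∈ Finset.Icc 2 n,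
      (G.filter (fun ab => (d:ℤ) ∣ ab.1 ∧ (d:ℤ) ∣ ab.2)).card :=
    le_trans (Finset.card_le_card hBadsub) (Finset.card_biUnion_le)
  -- per-d bound
  have hperd : ∀ d ∈ Finset.Icc 2 n,
      ((G.filter (fun ab => (d:ℤ) ∣ ab.1 ∧ (d:ℤ) ∣ ab.2)).card : ℝ) ≤
        (X/((d:ℝ)*(Q:ℝ)) + 2) * (2*X^2/((d:ℝ)*(Q:ℝ)) + 2) := by
    intro d hd
    rw [Finset.mem_Icc] at hd
    have hd2 : 2 ≤ d := hd.1
    have hdR : (2:ℝ) ≤ (d:ℝ) := by exact_mod_cast hd2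
    have hdQpos : (0:ℝ) < (d:ℝ)*(Q:ℝ) := by positivity
    set Ad : Finset ℤ := A.filter (fun a => (d:ℤ) ∣ a) with hAd
    set Bd : Finset ℤ := Bs.filter (fun b => (d:ℤ) ∣ b) with hBd
    have hsub : G.filter (fun ab => (d:ℤ) ∣ ab.1 ∧ (d:ℤ) ∣ ab.2) ⊆ Ad ×ˢ Bd := by
      intro ab hab
      rw [Finset.mem_filter] at hab
      obtain ⟨habG, hdd1, hdd2⟩ := hab
      rw [hG, Finset.mem_product] at habG
      rw [Finset.mem_product]
      exact ⟨Finset.mem_filter.mpr ⟨habG.1, hdd1⟩, Finset.mem_filter.mpr ⟨habG.2, hdd2⟩⟩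
    have hcardle : (G.filter (fun ab => (d:ℤ) ∣ ab.1 ∧ (d:ℤ) ∣ ab.2)).card ≤ Ad.card * Bd.card := by
      rw [← Finset.card_product]
      exact Finset.card_le_card hsub
    by_cases hcop : Nat.Coprime d Q
    · -- use CRT
      have hicop : IsCoprime (d:ℤ) (Q:ℤ) := Nat.isCoprime_iff_coprime.mpr hcop
      obtain ⟨r1, hr1⟩ := crt2 (d:ℤ) (Q:ℤ) 1 hicop
      obtain ⟨r2, hr2⟩ := crt2 (d:ℤ) (Q:ℤ) b₀ hicop
      have hAdsub : Ad ⊆ (Finset.Icc 1 N).filter (fun a => ((d:ℤ)*(Q:ℤ)) ∣ a - r1) := by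
        intro a ha
        rw [hAd, Finset.mem_filter, hA, Finset.mem_filter] at ha
        rw [Finset.mem_filter]
        exact ⟨ha.1.1, hr1 a ha.2 ha.1.2⟩
      have hBdsub : Bd ⊆ (Finset.Icc (-N2) N2).filter (fun b => ((d:ℤ)*(Q:ℤ)) ∣ b - r2) := by
        intro b hb
        rw [hBd, Finset.mem_filter, hBs, Finset.mem_filter] at hb
        rw [Finset.mem_filter]
        exact ⟨hb.1.1, hr2 b hb.2 hb.1.2⟩
      have hdQZ : (0:ℤ) < (d:ℤ)*(Q:ℤ) := by
        have : (0:ℤ) < (d:ℤ) := by exact_mod_cast (by omega : 0 < d)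
        have : (0:ℤ) < (Q:ℤ) := by exact_mod_cast hQpos
        positivity
      have hAdc : (Ad.card : ℝ) ≤ X/((d:ℝ)*(Q:ℝ)) + 2 := by
        have h := count_upper 1 N r1 ((d:ℤ)*(Q:ℤ)) hdQZ hN1
        push_cast at h
        have hmono' : (Ad.card : ℝ) ≤
            (((Finset.Icc 1 N).filter (fun a => ((d:ℤ)*(Q:ℤ)) ∣ a - r1)).card : ℝ) := by
          exact_mod_cast Finset.card_le_card hAdsub
        refine le_trans hmono' (le_trans h ?_)
        gcongr ((?_):ℝ)/((d:ℝ)*(Q:ℝ)) + 2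
        linarith
      have hBdc : (Bd.card : ℝ) ≤ 2*X^2/((d:ℝ)*(Q:ℝ)) + 2 := by
        have h := count_upper (-N2) N2 r2 ((d:ℤ)*(Q:ℤ)) hdQZ (by omega)
        push_cast at h
        have hmono' : (Bd.card : ℝ) ≤
            (((Finset.Icc (-N2) N2).filter (fun b => ((d:ℤ)*(Q:ℤ)) ∣ b - r2)).card : ℝ) := by
          exact_mod_cast Finset.card_le_card hBdsub
        refine le_trans hmono' (le_trans h ?_)
        gcongr ((?_):ℝ)/((d:ℝ)*(Q:ℝ)) + 2
        linarith
      calc ((G.filter (fun ab => (d:ℤ) ∣ ab.1 ∧ (d:ℤ) ∣ ab.2)).card : ℝ)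
          ≤ (Ad.card : ℝ) * (Bd.card : ℝ) := by exact_mod_cast hcardle
        _ ≤ (X/((d:ℝ)*(Q:ℝ)) + 2) * (2*X^2/((d:ℝ)*(Q:ℝ)) + 2) := by
            apply mul_le_mul hAdc hBdc (by positivity) ?_
            positivity
    · -- Ad is empty
      have hAdempty : Ad = ∅ := by
        rw [Finset.eq_empty_iff_forall_notMem]
        intro a ha
        rw [hAd, Finset.mem_filter, hA, Finset.mem_filter] at ha
        set g' : ℕ := Nat.gcd d Q with hg'
        have hg'1 : g' ≠ 1 := hcop
        have hg'0 : g' ≠ 0 := by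
          intro h
          have := Nat.eq_zero_of_gcd_eq_zero_right h
          omega
        have h1 : (g':ℤ) ∣ a := dvd_trans (Int.natCast_dvd_natCast.mpr (Nat.gcd_dvd_left d Q)) ha.2
        have h2 : (g':ℤ) ∣ a - 1 :=
          dvd_trans (Int.natCast_dvd_natCast.mpr (Nat.gcd_dvd_right d Q)) ha.1.2
        have h3 : (g':ℤ) ∣ 1 := by
          have := dvd_sub h1 h2
          simpa using this
        have := Int.le_of_dvd one_pos h3
        omega
      have : Ad.card = 0 := by rw [hAdempty]; simp
      calc ((G.filter (fun ab => (d:ℤ) ∣ ab.1 ∧ (d:ℤ) ∣ ab.2)).card : ℝ)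
          ≤ (Ad.card : ℝ) * (Bd.card : ℝ) := by exact_mod_cast hcardle
        _ = 0 := by rw [this]; simp
        _ ≤ _ := by positivity
  -- step 6 : sum the bad bound
  have hbadsum : (Bad.card : ℝ) ≤
      2*X^3/(Q:ℝ)^2 * (3/4) + (2*X/(Q:ℝ) + 4*X^2/(Q:ℝ)) * (2*Real.sqrt X) + 4*X := by
    have h1 : (Bad.card : ℝ) ≤ ∑ d ∈ Finset.Icc 2 n,
        ((G.filter (fun ab => (d:ℤ) ∣ ab.1 ∧ (d:ℤ) ∣ ab.2)).card : ℝ) := by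
      calc (Bad.card : ℝ) ≤ ((∑ d ∈ Finset.Icc 2 n,
          (G.filter (fun ab => (d:ℤ) ∣ ab.1 ∧ (d:ℤ) ∣ ab.2)).card : ℕ) : ℝ) := by
            exact_mod_cast hBadcard
        _ = _ := by push_cast; ring
    have h2 : ∑ d ∈ Finset.Icc 2 n,
        ((G.filter (fun ab => (d:ℤ) ∣ ab.1 ∧ (d:ℤ) ∣ ab.2)).card : ℝ) ≤
        ∑ d ∈ Finset.Icc 2 n, ((X/((d:ℝ)*(Q:ℝ)) + 2) * (2*X^2/((d:ℝ)*(Q:ℝ)) + 2)) :=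
      Finset.sum_le_sum hperd
    have h3 : ∀ d ∈ Finset.Icc 2 n, (X/((d:ℝ)*(Q:ℝ)) + 2) * (2*X^2/((d:ℝ)*(Q:ℝ)) + 2) =
        2*X^3/(Q:ℝ)^2 * (1/(d:ℝ)^2) + (2*X/(Q:ℝ) + 4*X^2/(Q:ℝ)) * (1/(d:ℝ)) + 4 := by
      intro d hd
      rw [Finset.mem_Icc] at hd
      have hdR : (2:ℝ) ≤ (d:ℝ) := by exact_mod_cast hd.1
      have hd0 : (d:ℝ) ≠ 0 := by linarith
      field_simp
      ring
    rw [Finset.sum_congr rfl h3] at h2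
    have h4 : ∑ d ∈ Finset.Icc 2 n, (2*X^3/(Q:ℝ)^2 * (1/(d:ℝ)^2)
          + (2*X/(Q:ℝ) + 4*X^2/(Q:ℝ)) * (1/(d:ℝ)) + 4) =
        2*X^3/(Q:ℝ)^2 * (∑ d ∈ Finset.Icc 2 n, 1/(d:ℝ)^2)
          + (2*X/(Q:ℝ) + 4*X^2/(Q:ℝ)) * (∑ d ∈ Finset.Icc 2 n, 1/(d:ℝ))
          + 4 * (Finset.Icc 2 n).card := by
      rw [Finset.sum_add_distrib, Finset.sum_add_distrib, ← Finset.mul_sum, ← Finset.mul_sum]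
      simp [mul_comm]
    have h5 : (∑ d ∈ Finset.Icc 2 n, 1/(d:ℝ)^2) ≤ 3/4 := by
      have := sum_inv_sq n
      simpa using this
    have h6 : (∑ d ∈ Finset.Icc 2 n, 1/(d:ℝ)) ≤ 2*Real.sqrt X := by
      have := sum_inv_le n X hnX hX1
      simpa using this
    have h7 : (((Finset.Icc 2 n).card : ℕ) : ℝ) ≤ X := by
      rw [Nat.card_Icc]
      calc (((n+1-2 : ℕ)):ℝ) ≤ (n:ℝ) := by
            have : (n+1-2 : ℕ) ≤ n := by omega
            exact_mod_cast this
        _ ≤ X := hnX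
    have hc1 : (0:ℝ) ≤ 2*X^3/(Q:ℝ)^2 := by positivity
    have hc2 : (0:ℝ) ≤ 2*X/(Q:ℝ) + 4*X^2/(Q:ℝ) := by positivity
    calc (Bad.card : ℝ) ≤ _ := le_trans h1 h2
      _ = _ := h4
      _ ≤ 2*X^3/(Q:ℝ)^2 * (3/4) + (2*X/(Q:ℝ) + 4*X^2/(Q:ℝ)) * (2*Real.sqrt X) + 4*X := by
          have g1 := mul_le_mul_of_nonneg_left h5 hc1
          have g2 := mul_le_mul_of_nonneg_left h6 hc2
          have g3 : 4 * (((Finset.Icc 2 n).card : ℕ) : ℝ) ≤ 4 * X := by linarith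
          linarith
  -- step 7 : final assembly
  set s : ℝ := Real.sqrt X with hsdef
  have hs0 : 0 < s := Real.sqrt_pos.mpr hXpos
  have hss : s * s = X := Real.mul_self_sqrt hXpos.le
  have hs1' : 1 ≤ s := by nlinarith
  set t : ℝ := 1/(Q:ℝ) with htdef
  have ht0 : 0 < t := by positivity
  have ht9 : t ≤ 1/9 := by
    rw [htdef]
    rw [div_le_div_iff₀ hQRpos (by norm_num)]
    linarith
  have hQ4pos : (0:ℝ) < (Q:ℝ)^4 := by positivity
  have hsQ : 10^4*(Q:ℝ)^2 ≤ s := by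
    by_contra hcon
    push_neg at hcon
    have hlt : s*s < (10^4*(Q:ℝ)^2)*(10^4*(Q:ℝ)^2) :=
      mul_lt_mul'' hcon hcon hs0.le hs0.le
    rw [hss] at hlt
    nlinarith [hX, hQ4pos]
  have hQt : (Q:ℝ)*t = 1 := by rw [htdef]; field_simp
  have hQt2 : (Q:ℝ)^2*t = (Q:ℝ) := by rw [htdef]; field_simp
  have hQt3 : (Q:ℝ)^2*t^2 = 1 := by rw [htdef]; field_simp
  have hst : 90000 ≤ s*t := by nlinarith [mul_le_mul_of_nonneg_right hsQ ht0.le, hQt2, hQR]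
  have hts2 : 10000 ≤ s*t^2 := by
    nlinarith [mul_le_mul_of_nonneg_right hsQ (sq_nonneg t), hQt3]
  have hsbig : 810000 ≤ s := by nlinarith [hsQ, hQR]
  have hkey := key_ineq s t hs1' ht0 ht9 hst hts2 hsbig
  have hTcard : X^3/(4*(Q:ℝ)^2) ≤ (T.card : ℝ) := by
    have hGR : (T.card : ℝ) = (G.card : ℝ) - (Bad.card : ℝ) := by
      have h := hsplitG
      have : ((T.card : ℕ) : ℝ) + ((Bad.card : ℕ) : ℝ) = ((G.card : ℕ) : ℝ) := by
        exact_mod_cast congrArg (fun k : ℕ => (k : ℝ)) h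
      linarith
    have hnn1 : (0:ℝ) ≤ (X - 2)/(Q:ℝ) - 1 := by
      rw [sub_nonneg, le_div_iff₀ hQRpos]
      nlinarith
    have hnn2 : (0:ℝ) ≤ (2*X^2 - 2)/(Q:ℝ) - 1 := by
      rw [sub_nonneg, le_div_iff₀ hQRpos]
      nlinarith
    have hGlb : ((X - 2)/(Q:ℝ) - 1) * ((2*X^2 - 2)/(Q:ℝ) - 1) ≤ (G.card : ℝ) := by
      have hGc : (G.card : ℝ) = (A.card : ℝ) * (Bs.card : ℝ) := by
        rw [hGcard]; push_cast; ring
      rw [hGc]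
      exact mul_le_mul hAcard hBcard hnn2 (by positivity)
    have e1 : X^3/(4*(Q:ℝ)^2) = (s*s)^3*(t^2/4) := by
      rw [← hss, htdef]
      field_simp
      all_goals ring
    have e2 : ((X - 2)/(Q:ℝ) - 1)*((2*X^2 - 2)/(Q:ℝ) - 1)
        - (2*X^3/(Q:ℝ)^2*(3/4) + (2*X/(Q:ℝ) + 4*X^2/(Q:ℝ))*(2*s) + 4*X)
        = (((s*s)-2)*t - 1)*((2*(s*s)^2-2)*t - 1)
          - (2*(s*s)^3*t^2*(3/4) + (2*(s*s)*t + 4*(s*s)^2*t)*(2*s) + 4*(s*s)) := by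
      rw [← hss, htdef]
      field_simp
      all_goals ring
    rw [e1]
    calc (s*s)^3*(t^2/4) ≤ _ := hkey
      _ = ((X - 2)/(Q:ℝ) - 1)*((2*X^2 - 2)/(Q:ℝ) - 1)
          - (2*X^3/(Q:ℝ)^2*(3/4) + (2*X/(Q:ℝ) + 4*X^2/(Q:ℝ))*(2*s) + 4*X) := e2.symm
      _ ≤ (G.card : ℝ) - (Bad.card : ℝ) := by
          have := hbadsum
          rw [hsdef] at *
          linarith [hGlb, hbadsum]
      _ = (T.card : ℝ) := hGR.symm
  calc (1/(4*(Q:ℝ)^2)) * X^3 = X^3/(4*(Q:ℝ)^2) := by ring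
    _ ≤ (T.card:ℝ) := hTcard
    _ ≤ (S.ncard : ℝ) := hcard
end

section
/- Let α₊ be the unique real root of x³ + x − 1 and α₋ the unique real root of x³ − x − 1. Then, as X → ∞, #{(a,b) ∈ ℤ² : |a| < X² and |b³ + ab| < X³} = (2·log(α₋/α₊) + (4/3)·(α₊ + α₋))·X³ + o(X³). -/
open Filter

private lemma cube_exists (t : ℝ) : ∃ x : ℝ, 0 < x ∧ x ^ 3 + t * x = 1 := by
  obtain ⟨c, hc, hfc⟩ := intermediate_value_Icc (a := (0:ℝ)) (b := 1 + |t|)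
    (by positivity) (f := fun x => x ^ 3 + t * x)
    (Continuous.continuousOn (by continuity))
    (show (1:ℝ) ∈ Set.Icc _ _ by
      constructor
      · simp
      · have h := abs_nonneg t
        have h2 : t * (1 + |t|) ≥ -(|t| * (1 + |t|)) := by
          have := neg_abs_le t
          nlinarith
        nlinarith [sq_nonneg (|t|)])
  refine ⟨c, ?_, hfc⟩
  rcases lt_or_eq_of_le hc.1 with h | h
  · exact h
  · exfalso; rw [← h] at hfc; simp at hfc

private lemma cube_unique {t x y : ℝ} (hx : 0 < x) (hy : 0 < y)
    (hx1 : x ^ 3 + t * x = 1) (hy1 : y ^ 3 + t * y = 1) : x = y := by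
  by_contra hne
  rcases lt_or_gt_of_ne hne with h | h
  · nlinarith [mul_pos hx hy, mul_pos (mul_pos hx hy) hy, mul_pos (mul_pos hx hy) hx]
  · nlinarith [mul_pos hx hy, mul_pos (mul_pos hx hy) hy, mul_pos (mul_pos hx hy) hx]

noncomputable def rr (t : ℝ) : ℝ := (cube_exists t).choose

lemma rr_pos (t : ℝ) : 0 < rr t := (cube_exists t).choose_spec.1

lemma rr_eq (t : ℝ) : rr t ^ 3 + t * rr t = 1 := (cube_exists t).choose_spec.2

lemma rr_unique {t x : ℝ} (hx : 0 < x) (h : x ^ 3 + t * x = 1) : rr t = x :=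
  cube_unique (rr_pos t) hx (rr_eq t) h

lemma rr_anti : Antitone rr := by
  intro t₁ t₂ h
  rcases eq_or_lt_of_le h with rfl | h
  · exact le_refl _
  by_contra hlt
  push_neg at hlt
  have hx := rr_pos t₁; have hy := rr_pos t₂
  have h1 := rr_eq t₁; have h2 := rr_eq t₂
  nlinarith [mul_pos hx hy, mul_pos (mul_pos hx hy) hy, mul_pos (mul_pos hx hy) hx]

lemma rr_comp {x : ℝ} (hx : 0 < x) : rr (x⁻¹ - x ^ 2) = x := by
  apply rr_unique hx
  field_simp
  ring

lemma rr_inv_eq (t : ℝ) : (rr t)⁻¹ - (rr t) ^ 2 = t := by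
  have h := rr_eq t
  have hp := rr_pos t
  field_simp
  nlinarith

-- strict version of comp ordering: φ strictly anti
private lemma phi_lt {x y : ℝ} (hx : 0 < x) (hxy : x < y) : y⁻¹ - y ^ 2 < x⁻¹ - x ^ 2 := by
  have hy : 0 < y := hx.trans hxy
  have : y⁻¹ < x⁻¹ := by exact inv_strictAnti₀ hx hxy
  nlinarith

lemma rr_cont : Continuous rr := by
  rw [continuous_iff_continuousAt]
  intro t₀
  rw [ContinuousAt, Metric.tendsto_nhds]
  intro ε hε
  set x₀ := rr t₀ with hx₀
  have hx₀p : 0 < x₀ := rr_pos t₀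
  set δ := min (ε / 2) (x₀ / 2) with hδ
  have hδp : 0 < δ := by positivity
  have hδx : δ < x₀ := by
    calc δ ≤ x₀ / 2 := min_le_right _ _
    _ < x₀ := by linarith
  set t₁ := (x₀ + δ)⁻¹ - (x₀ + δ) ^ 2 with ht₁
  set t₂ := (x₀ - δ)⁻¹ - (x₀ - δ) ^ 2 with ht₂
  have h1 : t₁ < t₀ := by
    have := phi_lt hx₀p (show x₀ < x₀ + δ by linarith)
    rw [rr_inv_eq t₀] at this; exact this
  have h2 : t₀ < t₂ := by
    have := phi_lt (show (0:ℝ) < x₀ - δ by linarith) (show x₀ - δ < x₀ by linarith)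
    rw [rr_inv_eq t₀] at this; exact this
  have hmem : Set.Ioo t₁ t₂ ∈ nhds t₀ := Ioo_mem_nhds h1 h2
  filter_upwards [hmem] with t ht
  have hu : rr t ≤ x₀ + δ := by
    have := rr_anti (le_of_lt ht.1)
    rwa [rr_comp (show (0:ℝ) < x₀ + δ by linarith)] at this
  have hl : x₀ - δ ≤ rr t := by
    have := rr_anti (le_of_lt ht.2)
    rwa [rr_comp (show (0:ℝ) < x₀ - δ by linarith)] at this
  rw [Real.dist_eq, abs_lt]
  have : δ ≤ ε / 2 := min_le_left _ _
  constructor <;> linarith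

lemma rr_hasDeriv (t : ℝ) :
    HasDerivAt rr (-((rr t) ^ 2)⁻¹ - 2 * rr t)⁻¹ t := by
  have hp := rr_pos t
  have hne : rr t ≠ 0 := ne_of_gt hp
  have hf : HasDerivAt (fun x : ℝ => x⁻¹ - x ^ 2) (-((rr t) ^ 2)⁻¹ - 2 * rr t) (rr t) := by
    have h1 : HasDerivAt (fun x : ℝ => x⁻¹) (-((rr t) ^ 2)⁻¹) (rr t) := by
      simpa using (hasDerivAt_inv hne)
    have h2 : HasDerivAt (fun x : ℝ => x ^ 2) (2 * rr t) (rr t) := by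
      simpa [mul_comm] using (hasDerivAt_pow 2 (rr t))
    simpa using h1.fun_sub h2
  exact HasDerivAt.of_local_left_inverse (rr_cont.continuousAt) hf
    (by nlinarith [sq_nonneg (rr t), inv_pos.mpr (pow_pos hp 2)])
    (Eventually.of_forall fun y => rr_inv_eq y)

noncomputable def HH (t : ℝ) : ℝ := t * rr t - Real.log (rr t) + (rr t) ^ 3 / 3

lemma HH_deriv (t : ℝ) : HasDerivAt HH (rr t) t := by
  have hp := rr_pos t
  have hne : rr t ≠ 0 := ne_of_gt hp
  set d := (-((rr t) ^ 2)⁻¹ - 2 * rr t)⁻¹ with hd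
  have hr := rr_hasDeriv t
  have h1 : HasDerivAt (fun s => s * rr s) (1 * rr t + t * d) t :=
    (hasDerivAt_id t).mul hr
  have h2 : HasDerivAt (fun s => Real.log (rr s)) (d / rr t) t := hr.log hne
  have h3 : HasDerivAt (fun s => (rr s) ^ 3 / 3) (3 * (rr t) ^ 2 * d / 3) t := by
    exact (hr.fun_pow 3).div_const 3
  have := (h1.fun_sub h2).fun_add h3
  refine this.congr_deriv (Eq.symm ?_)
  have hdne : (-((rr t) ^ 2)⁻¹ - 2 * rr t) ≠ 0 := by
    nlinarith [sq_nonneg (rr t), inv_pos.mpr (pow_pos hp 2)]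
  have ht : (rr t)⁻¹ - (rr t) ^ 2 = t := rr_inv_eq t
  have h0 : t - (rr t)⁻¹ + rr t ^ 2 = 0 := by linarith [rr_inv_eq t]
  have key : t * d - d / rr t + 3 * rr t ^ 2 * d / 3 = d * (t - (rr t)⁻¹ + rr t ^ 2) := by
    field_simp
  linear_combination (-1 : ℝ) * key + (-d) * h0

lemma integral_rr : ∫ t in (-1:ℝ)..1, rr t = HH 1 - HH (-1) :=
  intervalIntegral.integral_eq_sub_of_hasDerivAt
    (fun t _ => HH_deriv t) (rr_anti.intervalIntegrable)

lemma rr_one {αp : ℝ} (hp : αp ^ 3 + αp - 1 = 0) : rr 1 = αp := by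
  have hpos : 0 < αp := by
    by_contra h; push_neg at h
    nlinarith [mul_nonneg (sq_nonneg αp) (neg_nonneg.mpr h)]
  exact rr_unique hpos (by linarith)

lemma rr_neg_one {αm : ℝ} (hm : αm ^ 3 - αm - 1 = 0) : rr (-1) = αm := by
  have hpos : 0 < αm := by nlinarith [sq_nonneg (αm - 1), sq_nonneg (αm + 1), sq_nonneg αm]
  exact rr_unique hpos (by linarith)

lemma integral_rr_value {αp αm : ℝ} (hp : αp ^ 3 + αp - 1 = 0) (hm : αm ^ 3 - αm - 1 = 0) :
    ∫ t in (-1:ℝ)..1, rr t = Real.log (αm / αp) + (2/3) * (αp + αm) := by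
  have hppos : 0 < αp := by
    by_contra h; push_neg at h
    nlinarith [mul_nonneg (sq_nonneg αp) (neg_nonneg.mpr h)]
  have hmpos : 0 < αm := by nlinarith [sq_nonneg (αm - 1), sq_nonneg (αm + 1), sq_nonneg αm]
  rw [integral_rr]
  unfold HH
  rw [rr_one hp, rr_neg_one hm]
  rw [Real.log_div (ne_of_gt hmpos) (ne_of_gt hppos)]
  have h1 : αp ^ 3 = 1 - αp := by linarith
  have h2 : αm ^ 3 = 1 + αm := by linarith
  rw [h1, h2]
  ring

lemma rr_sq {t : ℝ} (ht : -1 < t) : 0 < 3 * (rr t) ^ 2 + 4 * t := by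
  by_contra h
  push_neg at h
  have hp := rr_pos t
  have he := rr_eq t
  -- t ≤ -(3/4) s^2 < 0, s^2 < 4/3, 1 = s^3 + t s ≤ s^3/4, contradiction
  have ht0 : t < 0 := by nlinarith
  have hs2 : rr t ^ 2 < 4 / 3 := by nlinarith
  have h1 : 1 ≤ rr t ^ 3 / 4 := by nlinarith [mul_pos hp hp]
  nlinarith [pow_pos hp 3, sq_nonneg (rr t ^ 3 - 4)]

lemma interval_char {a ρ Y b : ℝ} (hρ : 0 < ρ) (he : ρ ^ 3 + a * ρ = Y)
    (hq : 0 < 3 * ρ ^ 2 + 4 * a) : |b ^ 3 + a * b| < Y ↔ |b| < ρ := by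
  have hY : 0 < Y := by nlinarith [sq_nonneg ρ]
  rw [abs_lt, abs_lt]
  constructor
  · rintro ⟨h1, h2⟩
    constructor
    · -- -ρ < b : else b ≤ -ρ, then b^3+ab ≤ -Y
      by_contra h
      push_neg at h  -- b ≤ -ρ
      nlinarith [sq_nonneg (b - ρ/2), sq_nonneg (b + ρ), mul_nonneg (neg_nonneg.mpr (by linarith : b + ρ ≤ 0)) (sq_nonneg (b - ρ/2))]
    · by_contra h
      push_neg at h  -- ρ ≤ b
      nlinarith [sq_nonneg (b + ρ/2), mul_nonneg (by linarith : (0:ℝ) ≤ b - ρ) (sq_nonneg (b + ρ/2))]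
  · rintro ⟨h1, h2⟩
    constructor
    · nlinarith [mul_pos (by linarith : (0:ℝ) < b + ρ) (by nlinarith [sq_nonneg (2*b - ρ)] : (0:ℝ) < (b - ρ/2)^2 + (3*ρ^2 + 4*a)/4)]
    · nlinarith [mul_pos (by linarith : (0:ℝ) < ρ - b) (by nlinarith [sq_nonneg (2*b + ρ)] : (0:ℝ) < (b + ρ/2)^2 + (3*ρ^2 + 4*a)/4)]

lemma rr_intInt (u v : ℝ) : IntervalIntegrable rr MeasureTheory.volume u v :=
  rr_anti.intervalIntegrable

lemma int_rr_le {u v M : ℝ} (h : u ≤ v) (hM : ∀ x ∈ Set.Icc u v, rr x ≤ M) :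
    ∫ x in u..v, rr x ≤ (v - u) * M := by
  calc ∫ x in u..v, rr x ≤ ∫ _x in u..v, M :=
        intervalIntegral.integral_mono_on h (rr_intInt u v) intervalIntegrable_const hM
  _ = (v - u) * M := by rw [intervalIntegral.integral_const, smul_eq_mul]

lemma int_rr_nonneg {u v : ℝ} (h : u ≤ v) : 0 ≤ ∫ x in u..v, rr x :=
  intervalIntegral.integral_nonneg h (fun x _ => (rr_pos x).le)

lemma int_rr_split (u v w : ℝ) :
    ∫ x in u..w, rr x = (∫ x in u..v, rr x) + ∫ x in v..w, rr x :=
  (intervalIntegral.integral_add_adjacent_intervals (rr_intInt u v) (rr_intInt v w)).symm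

-- characterization of the b-range for fixed a
lemma b_char {X : ℝ} (hX : 0 < X) {a : ℤ} (ha1 : (-(X^2) : ℝ) < a) (ha2 : (a:ℝ) < X^2)
    (b : ℤ) : (|b ^ 3 + a * b| : ℝ) < X ^ 3 ↔ (|b| : ℝ) < X * rr ((a:ℝ)/X^2) := by
  have hX2 : (0:ℝ) < X^2 := by positivity
  set t := (a:ℝ)/X^2 with htdef
  have ht1 : -1 < t := by rw [htdef, lt_div_iff₀ hX2]; linarith
  have hρ : 0 < X * rr t := mul_pos hX (rr_pos t)
  have ha' : (a:ℝ) = t * X^2 := by rw [htdef]; field_simp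
  have he : (X * rr t) ^ 3 + (a:ℝ) * (X * rr t) = X^3 := by
    rw [ha']; linear_combination X^3 * rr_eq t
  have hq : 0 < 3 * (X * rr t) ^ 2 + 4 * (a:ℝ) := by
    have h := rr_sq ht1
    have : 3 * (X * rr t) ^ 2 + 4 * (a:ℝ) = X^2 * (3 * rr t ^ 2 + 4 * t) := by
      rw [ha']; ring
    rw [this]; exact mul_pos hX2 h
  exact interval_char hρ he hq

set_option maxHeartbeats 2000000 in
lemma main_est {X : ℝ} (hX : 2 ≤ X) :
    |(Set.ncard {q : ℤ × ℤ | (|q.1| : ℝ) < X ^ 2 ∧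
        (|q.2 ^ 3 + q.1 * q.2| : ℝ) < X ^ 3} : ℝ)
      - 2 * X ^ 3 * ∫ t in (-1:ℝ)..1, rr t| ≤ (3 + 4 * rr (-2)) * X ^ 2 := by
  have hX0 : (0:ℝ) < X := by linarith
  have hX2 : (0:ℝ) < X ^ 2 := by positivity
  have hX24 : (4:ℝ) ≤ X ^ 2 := by nlinarith
  set I : ℝ := ∫ t in (-1:ℝ)..1, rr t with hI
  set A : ℤ := ⌈X ^ 2⌉ with hA
  have hA1 : (X:ℝ) ^ 2 ≤ (A:ℝ) := Int.le_ceil _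
  have hA2 : (A:ℝ) < X ^ 2 + 1 := Int.ceil_lt_add_one _
  have hA0 : 1 ≤ A := by
    have : (1:ℝ) ≤ (A:ℝ) := by linarith
    exact_mod_cast this
  set ρ : ℤ → ℝ := fun a => X * rr ((a:ℝ) / X ^ 2) with hρdef
  have hmem : ∀ a : ℤ, a ∈ Finset.Ioo (-A) A → (-(X^2):ℝ) < a ∧ (a:ℝ) < X^2 := by
    intro a ha
    rw [Finset.mem_Ioo] at ha
    constructor
    · have h1 : (1:ℤ) - A ≤ a := by omega
      have : (1:ℝ) - A ≤ (a:ℝ) := by exact_mod_cast h1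
      linarith
    · have h1 : a ≤ A - 1 := by omega
      have : (a:ℝ) ≤ (A:ℝ) - 1 := by exact_mod_cast h1
      linarith
  have hρpos : ∀ a : ℤ, 0 < ρ a := fun a => mul_pos hX0 (rr_pos _)
  have hρbd : ∀ a : ℤ, a ∈ Finset.Ioo (-A) A → ρ a ≤ X * rr (-1) := by
    intro a ha
    have h := (hmem a ha).1
    have : (-1:ℝ) ≤ (a:ℝ) / X ^ 2 := by rw [le_div_iff₀ hX2]; linarith
    exact mul_le_mul_of_nonneg_left (rr_anti this) hX0.le
  set c : ℤ → ℤ := fun a => ⌈ρ a⌉ with hcdef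
  set CB : ℤ := ⌈X * rr (-1)⌉ with hCB
  have hcC : ∀ a : ℤ, a ∈ Finset.Ioo (-A) A → c a ≤ CB := fun a ha =>
    Int.ceil_le_ceil (hρbd a ha)
  have hc1 : ∀ a : ℤ, 1 ≤ c a := by
    intro a
    have : (0:ℝ) < (c a : ℝ) := lt_of_lt_of_le (hρpos a) (Int.le_ceil _)
    exact_mod_cast this
  set F : Finset (ℤ × ℤ) := (Finset.Ioo (-A) A ×ˢ Finset.Ioo (-CB) CB).filter
      (fun q : ℤ × ℤ => (|q.1| : ℝ) < X ^ 2 ∧ (|q.2 ^ 3 + q.1 * q.2| : ℝ) < X ^ 3) with hF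
  have hset : {q : ℤ × ℤ | (|q.1| : ℝ) < X ^ 2 ∧ (|q.2 ^ 3 + q.1 * q.2| : ℝ) < X ^ 3}
      = (F : Set (ℤ × ℤ)) := by
    ext ⟨a, b⟩
    simp only [Set.mem_setOf_eq, hF, Finset.coe_filter, Finset.mem_product, Finset.mem_Ioo]
    constructor
    · rintro ⟨h1, h2⟩
      have haI : a ∈ Finset.Ioo (-A) A := by
        rw [Finset.mem_Ioo]
        constructor
        · have : -(A:ℝ) < (a:ℝ) := by rw [abs_lt] at h1; linarith
          exact_mod_cast this
        · have : (a:ℝ) < (A:ℝ) := by rw [abs_lt] at h1; linarith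
          exact_mod_cast this
      refine ⟨⟨Finset.mem_Ioo.mp haI, ?_⟩, h1, h2⟩
      have hb : |(b:ℝ)| < ρ a := by
        rw [← b_char hX0 (hmem a haI).1 (hmem a haI).2 b]
        exact h2
      have hbC : |(b:ℝ)| < (CB : ℝ) := lt_of_lt_of_le hb
        (le_trans (hρbd a haI) (Int.le_ceil _))
      rw [← Int.cast_abs] at hbC
      have : |b| < CB := by exact_mod_cast hbC
      rw [abs_lt] at this
      exact this
    · rintro ⟨_, h⟩; exact h
  rw [hset, Set.ncard_coe_finset]
  have hfib : F.card = ∑ a ∈ Finset.Ioo (-A) A,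
      ((Finset.Ioo (-(c a)) (c a)).card) := by
    rw [Finset.card_eq_sum_card_fiberwise
      (f := Prod.fst) (t := Finset.Ioo (-A) A)
      (fun q hq => (Finset.mem_product.mp (Finset.mem_filter.mp hq).1).1)]
    apply Finset.sum_congr rfl
    intro a ha
    have himg : F.filter (fun q => q.1 = a)
        = Finset.image (fun b => (a, b)) (Finset.Ioo (-(c a)) (c a)) := by
      ext ⟨a', b⟩
      simp only [Finset.mem_filter, Finset.mem_product, Finset.mem_Ioo, Finset.mem_image,
        Prod.mk.injEq, hF]
      constructor
      · rintro ⟨⟨⟨-, -⟩, -, h2⟩, heq⟩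
        subst heq
        refine ⟨b, ?_, rfl, rfl⟩
        have hb : |(b:ℝ)| < ρ a' := by
          rw [← b_char hX0 (hmem a' ha).1 (hmem a' ha).2 b]
          exact h2
        rw [← Int.cast_abs] at hb
        have : |b| < c a' := Int.lt_ceil.mpr hb
        rw [abs_lt] at this
        exact this
      · rintro ⟨b', hb', rfl, rfl⟩
        have habs : |b'| < c a := by rw [abs_lt]; exact hb'
        have hbρ : ((|b'| : ℤ) : ℝ) < ρ a := Int.lt_ceil.mp habs
        rw [Int.cast_abs] at hbρ
        have h2 : (|b' ^ 3 + a * b'| : ℝ) < X ^ 3 := by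
          rw [b_char hX0 (hmem a ha).1 (hmem a ha).2 b']
          exact hbρ
        have hbC : -CB < b' ∧ b' < CB := by
          have := hcC a ha
          omega
        have h1 : |(a:ℝ)| < X ^ 2 := by
          rw [abs_lt]; exact ⟨by linarith [(hmem a ha).1], (hmem a ha).2⟩
        exact ⟨⟨⟨Finset.mem_Ioo.mp ha, hbC⟩, h1, h2⟩, rfl⟩
    rw [himg, Finset.card_image_of_injective _ (fun b₁ b₂ h => (Prod.ext_iff.mp h).2)]
  set T : ℝ := ∑ a ∈ Finset.Ioo (-A) A, rr ((a:ℝ) / X ^ 2) with hT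
  have hNreal : (F.card : ℝ) = ∑ a ∈ Finset.Ioo (-A) A, ((2 * c a - 1 : ℤ) : ℝ) := by
    rw [hfib, Nat.cast_sum]
    apply Finset.sum_congr rfl
    intro a _
    rw [Int.card_Ioo]
    have hz : ((c a - -c a - 1).toNat : ℤ) = 2 * c a - 1 := by
      have := hc1 a; omega
    exact_mod_cast congrArg (fun z : ℤ => (z : ℝ)) hz
  have hcard2 : ((Finset.Ioo (-A) A).card : ℝ) = 2 * (A:ℝ) - 1 := by
    rw [Int.card_Ioo]
    have hz : ((A - -A - 1).toNat : ℤ) = 2 * A - 1 := by omega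
    exact_mod_cast congrArg (fun z : ℤ => (z : ℝ)) hz
  have hNub : (F.card : ℝ) ≤ 2 * X * T + 3 * X ^ 2 := by
    rw [hNreal]
    calc ∑ a ∈ Finset.Ioo (-A) A, ((2 * c a - 1 : ℤ) : ℝ)
        ≤ ∑ a ∈ Finset.Ioo (-A) A, (2 * ρ a + 1) := by
          apply Finset.sum_le_sum
          intro a _
          have h1 : (c a : ℝ) < ρ a + 1 := Int.ceil_lt_add_one _
          push_cast
          linarith
      _ = 2 * X * T + ((Finset.Ioo (-A) A).card : ℝ) := by
          rw [Finset.sum_add_distrib, Finset.sum_const, nsmul_eq_mul, mul_one, hT,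
            Finset.mul_sum]
          congr 1
          apply Finset.sum_congr rfl
          intro a _
          rw [hρdef]; ring
      _ ≤ 2 * X * T + 3 * X ^ 2 := by rw [hcard2]; linarith
  have hNlb : 2 * X * T - 3 * X ^ 2 ≤ (F.card : ℝ) := by
    rw [hNreal]
    calc 2 * X * T - 3 * X ^ 2
        ≤ 2 * X * T - ((Finset.Ioo (-A) A).card : ℝ) := by rw [hcard2]; linarith
      _ = ∑ a ∈ Finset.Ioo (-A) A, (2 * ρ a - 1) := by
          rw [Finset.sum_sub_distrib, Finset.sum_const, nsmul_eq_mul, mul_one, hT,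
            Finset.mul_sum]
          congr 1
          apply Finset.sum_congr rfl
          intro a _
          rw [hρdef]; ring
      _ ≤ ∑ a ∈ Finset.Ioo (-A) A, ((2 * c a - 1 : ℤ) : ℝ) := by
          apply Finset.sum_le_sum
          intro a _
          have h1 : ρ a ≤ (c a : ℝ) := Int.le_ceil _
          push_cast
          linarith
  set g : ℝ → ℝ := fun u => rr (u / X ^ 2) with hg
  have hganti : Antitone g := by
    intro u v huv
    exact rr_anti (by gcongr)
  set n : ℕ := (2 * A - 1).toNat with hn
  have hncast : ((n : ℕ) : ℝ) = 2 * (A:ℝ) - 1 := by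
    have hz : ((n : ℕ) : ℤ) = 2 * A - 1 := by rw [hn]; omega
    exact_mod_cast congrArg (fun z : ℤ => (z : ℝ)) hz
  set x₀ : ℝ := 1 - (A:ℝ) with hx₀
  have hT1 : T = ∑ i ∈ Finset.range n, g (x₀ + (i : ℕ)) := by
    rw [hT]
    apply Finset.sum_bij' (i := fun (a : ℤ) (_ : a ∈ Finset.Ioo (-A) A) => (a + A - 1).toNat)
      (j := fun (i : ℕ) (_ : i ∈ Finset.range n) => 1 - A + (i : ℤ))
    · intro a ha
      simp only [Finset.mem_Ioo] at ha
      simp only [Finset.mem_range, hn]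
      omega
    · intro i hi
      simp only [Finset.mem_range, hn] at hi
      simp only [Finset.mem_Ioo]
      omega
    · intro a ha
      simp only [Finset.mem_Ioo] at ha
      omega
    · intro i hi
      simp only [Finset.mem_range, hn] at hi
      omega
    · intro a ha
      simp only [Finset.mem_Ioo] at ha
      have hz : (((a + A - 1).toNat : ℕ) : ℤ) = a + A - 1 := by omega
      have hr : (((a + A - 1).toNat : ℕ) : ℝ) = (a:ℝ) + (A:ℝ) - 1 := by
        exact_mod_cast congrArg (fun z : ℤ => (z : ℝ)) hz
      rw [hg, hx₀, hr]
      norm_num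
  have hTlb : X ^ 2 * ∫ t in ((1-(A:ℝ))/X^2)..((A:ℝ)/X^2), rr t ≤ T := by
    have h := AntitoneOn.integral_le_sum (x₀ := x₀) (a := n) (f := g)
      (hganti.antitoneOn _)
    rw [← hT1] at h
    have hend : x₀ + (n:ℝ) = (A:ℝ) := by rw [hx₀, hncast]; ring
    rw [hend] at h
    have hcomp : ∫ x in x₀..(A:ℝ), g x = X^2 * ∫ t in (x₀/X^2)..((A:ℝ)/X^2), rr t := by
      rw [hg]
      rw [intervalIntegral.integral_comp_div (c := X^2) rr (ne_of_gt hX2), smul_eq_mul]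
    rw [hcomp] at h
    rw [hx₀] at h
    exact h
  have hTub : T ≤ X ^ 2 * ∫ t in (-(A:ℝ)/X^2)..(((A:ℝ)-1)/X^2), rr t := by
    have h := AntitoneOn.sum_le_integral (x₀ := x₀ - 1) (a := n) (f := g)
      (hganti.antitoneOn _)
    have hsame : ∑ i ∈ Finset.range n, g (x₀ - 1 + ((i + 1 : ℕ) : ℝ)) =
        ∑ i ∈ Finset.range n, g (x₀ + (i : ℕ)) := by
      apply Finset.sum_congr rfl
      intro i _
      congr 1
      push_cast
      ring
    rw [hsame, ← hT1] at h
    have hend : x₀ - 1 + (n:ℝ) = (A:ℝ) - 1 := by rw [hx₀, hncast]; ring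
    rw [hend] at h
    have hcomp : ∫ x in (x₀-1)..((A:ℝ)-1), g x
        = X^2 * ∫ t in ((x₀-1)/X^2)..(((A:ℝ)-1)/X^2), rr t := by
      rw [hg]
      rw [intervalIntegral.integral_comp_div (c := X^2) rr (ne_of_gt hX2), smul_eq_mul]
    rw [hcomp] at h
    have hxm : x₀ - 1 = -(A:ℝ) := by rw [hx₀]; ring
    rw [hxm] at h
    exact h
  have hrneg2 : (0:ℝ) ≤ rr (-2) := (rr_pos _).le
  have hr1pos : (0:ℝ) ≤ rr (-1) := (rr_pos _).le
  have hr12 : rr (-1) ≤ rr (-2) := rr_anti (by norm_num)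
  have hIlb : I - rr (-1) / X ^ 2 ≤ ∫ t in ((1-(A:ℝ))/X^2)..((A:ℝ)/X^2), rr t := by
    set u₁ : ℝ := (1-(A:ℝ))/X^2 with hu₁
    set v₁ : ℝ := (A:ℝ)/X^2 with hv₁
    have hu₁a : (-1:ℝ) ≤ u₁ := by rw [hu₁, le_div_iff₀ hX2]; linarith
    have hv₁a : (1:ℝ) ≤ v₁ := by rw [hv₁, le_div_iff₀ hX2]; linarith
    have hu₁b : u₁ ≤ 1 := by rw [hu₁, div_le_iff₀ hX2]; nlinarith
    have hsplit : ∫ t in u₁..v₁, rr t = (∫ t in u₁..(1:ℝ), rr t) + ∫ t in (1:ℝ)..v₁, rr t :=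
      int_rr_split u₁ 1 v₁
    have hsplit2 : I = (∫ t in (-1:ℝ)..u₁, rr t) + ∫ t in u₁..(1:ℝ), rr t := by
      rw [hI]; exact int_rr_split (-1) u₁ 1
    have h1 : ∫ t in (-1:ℝ)..u₁, rr t ≤ (u₁ - (-1)) * rr (-1) := by
      apply int_rr_le hu₁a
      intro x hx
      exact rr_anti hx.1
    have h2 : (u₁ - (-1)) * rr (-1) ≤ rr (-1) / X ^ 2 := by
      have hb : u₁ - (-1) ≤ 1 / X ^ 2 := by
        have heq : u₁ - (-1) = (1 - (A:ℝ) + X ^ 2) / X ^ 2 := by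
          rw [hu₁]; field_simp; ring
        rw [heq, div_le_div_iff₀ hX2 hX2]
        nlinarith
      rw [div_eq_mul_one_div (rr (-1)) (X^2), mul_comm (rr (-1)) _]
      exact mul_le_mul_of_nonneg_right hb hr1pos
    have h3 : 0 ≤ ∫ t in (1:ℝ)..v₁, rr t := int_rr_nonneg hv₁a
    linarith
  have hIub : (∫ t in (-(A:ℝ)/X^2)..(((A:ℝ)-1)/X^2), rr t) ≤ I + rr (-2) / X ^ 2 := by
    set u₂ : ℝ := -(A:ℝ)/X^2 with hu₂
    set v₂ : ℝ := ((A:ℝ)-1)/X^2 with hv₂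
    have hu₂a : (-2:ℝ) ≤ u₂ := by rw [hu₂, le_div_iff₀ hX2]; nlinarith
    have hu₂b : u₂ ≤ -1 := by rw [hu₂, div_le_iff₀ hX2]; nlinarith
    have hv₂a : (-1:ℝ) ≤ v₂ := by rw [hv₂, le_div_iff₀ hX2]; nlinarith
    have hv₂b : v₂ ≤ 1 := by rw [hv₂, div_le_iff₀ hX2]; nlinarith
    have hsplit : ∫ t in u₂..v₂, rr t = (∫ t in u₂..(-1:ℝ), rr t) + ∫ t in (-1:ℝ)..v₂, rr t :=
      int_rr_split u₂ (-1) v₂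
    have hsplit2 : I = (∫ t in (-1:ℝ)..v₂, rr t) + ∫ t in v₂..(1:ℝ), rr t := by
      rw [hI]; exact int_rr_split (-1) v₂ 1
    have h1 : ∫ t in u₂..(-1:ℝ), rr t ≤ ((-1:ℝ) - u₂) * rr (-2) := by
      apply int_rr_le hu₂b
      intro x hx
      exact rr_anti (le_trans hu₂a hx.1)
    have h2 : ((-1:ℝ) - u₂) * rr (-2) ≤ rr (-2) / X ^ 2 := by
      have hb : (-1:ℝ) - u₂ ≤ 1 / X ^ 2 := by
        have heq : (-1:ℝ) - u₂ = ((A:ℝ) - X ^ 2) / X ^ 2 := by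
          rw [hu₂]; field_simp; ring
        rw [heq, div_le_div_iff₀ hX2 hX2]
        nlinarith
      rw [div_eq_mul_one_div (rr (-2)) (X^2), mul_comm (rr (-2)) _]
      exact mul_le_mul_of_nonneg_right hb hrneg2
    have h3 : 0 ≤ ∫ t in v₂..(1:ℝ), rr t := int_rr_nonneg hv₂b
    linarith
  -- combine
  rw [abs_le]
  have hT2 : X ^ 2 * I - rr (-1) ≤ T := by
    have := mul_le_mul_of_nonneg_left hIlb hX2.le
    calc X ^ 2 * I - rr (-1) ≤ X ^ 2 * (I - rr (-1) / X ^ 2) := by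
          rw [mul_sub]
          rw [mul_div_cancel₀ _ (ne_of_gt hX2)]
      _ ≤ T := le_trans this hTlb
  have hT3 : T ≤ X ^ 2 * I + rr (-2) := by
    have := mul_le_mul_of_nonneg_left hIub hX2.le
    calc T ≤ X ^ 2 * (I + rr (-2) / X ^ 2) := le_trans hTub this
      _ = X ^ 2 * I + rr (-2) := by
          rw [mul_add]
          rw [mul_div_cancel₀ _ (ne_of_gt hX2)]
  have h2X : (0:ℝ) ≤ 2 * X := by linarith
  have hXX : X * rr (-2) ≤ X ^ 2 * rr (-2) :=
    mul_le_mul_of_nonneg_right (by nlinarith) hrneg2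
  have hrr : 2 * X * rr (-1) ≤ 2 * X * rr (-2) := mul_le_mul_of_nonneg_left hr12 h2X
  constructor
  · nlinarith [mul_le_mul_of_nonneg_left hT2 h2X]
  · nlinarith [mul_le_mul_of_nonneg_left hT3 h2X]


theorem count_two_torsion_region (αp αm : ℝ) (hp : αp ^ 3 + αp - 1 = 0)
    (hm : αm ^ 3 - αm - 1 = 0) :
    Tendsto (fun X : ℝ =>
        (Set.ncard {q : ℤ × ℤ | (|q.1| : ℝ) < X ^ 2 ∧
          (|q.2 ^ 3 + q.1 * q.2| : ℝ) < X ^ 3} : ℝ) / X ^ 3)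
      atTop (nhds (2 * Real.log (αm / αp) + (4 / 3) * (αp + αm))) := by
  set I : ℝ := ∫ t in (-1:ℝ)..1, rr t with hI
  have hval : 2 * Real.log (αm / αp) + (4 / 3) * (αp + αm) = 2 * I := by
    rw [hI, integral_rr_value hp hm]; ring
  rw [hval]
  set C : ℝ := 3 + 4 * rr (-2) with hC
  have hC0 : 0 ≤ C := by have := (rr_pos (-2)).le; rw [hC]; linarith
  have hlo : Tendsto (fun X : ℝ => 2 * I - C / X) atTop (nhds (2 * I)) := by
    have h0 : Tendsto (fun X : ℝ => C / X) atTop (nhds 0) :=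
      tendsto_const_nhds.div_atTop tendsto_id
    have := tendsto_const_nhds (x := 2 * I) (f := atTop (α := ℝ)) |>.sub h0
    simpa using this
  have hhi : Tendsto (fun X : ℝ => 2 * I + C / X) atTop (nhds (2 * I)) := by
    have h0 : Tendsto (fun X : ℝ => C / X) atTop (nhds 0) :=
      tendsto_const_nhds.div_atTop tendsto_id
    have := tendsto_const_nhds (x := 2 * I) (f := atTop (α := ℝ)) |>.add h0
    simpa using this
  apply tendsto_of_tendsto_of_tendsto_of_le_of_le' hlo hhi
  · filter_upwards [eventually_ge_atTop (2:ℝ)] with X hX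
    have hX0 : (0:ℝ) < X := by linarith
    have hX3 : (0:ℝ) < X ^ 3 := by positivity
    have hest := main_est hX
    rw [abs_le] at hest
    rw [← hC, ← hI] at hest
    have heq : 2 * I - C / X = (2 * X ^ 3 * I - C * X ^ 2) / X ^ 3 := by
      field_simp
    rw [heq, div_le_div_iff₀ hX3 hX3]
    nlinarith [mul_le_mul_of_nonneg_right hest.1 (le_of_lt hX3)]
  · filter_upwards [eventually_ge_atTop (2:ℝ)] with X hX
    have hX0 : (0:ℝ) < X := by linarith
    have hX3 : (0:ℝ) < X ^ 3 := by positivity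
    have hest := main_est hX
    rw [abs_le] at hest
    rw [← hC, ← hI] at hest
    have heq : 2 * I + C / X = (2 * X ^ 3 * I + C * X ^ 2) / X ^ 3 := by
      field_simp
    rw [heq, div_le_div_iff₀ hX3 hX3]
    nlinarith [mul_le_mul_of_nonneg_right hest.2 (le_of_lt hX3)]
end
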